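/- The kernel map T ↦ ker(T) is a bijection between the set RO(G,<) of reduction operators relative to (G,<) and the set of all linear subspaces of K⟨G⟩. -/

import Mathlib

open Finsupp
set_option linter.unusedSectionVars false
set_option linter.unusedVariables false

variable {K G : Type*} [Field K] [LinearOrder G] [WellFoundedLT G]

/-- `T` is a reduction operator relative to `(G, <)`: an idempotent linear endomorphism of
`K⟨G⟩` such that `T g ≤ g` for every basis element `g`, i.e. `T g = g` or the leading term
of `T g` is strictly smaller than `g`. -/
def IsRedOp (T : (G →₀ K) →ₗ[K] (G →₀ K)) : Prop :=
  T ∘ₗ T = T ∧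
    ∀ g : G, T (single g 1) = single g 1 ∨ (T (single g 1)).support.max < (g : WithBot G)

lemma max_lt_coe_of_forall {s : Finset G} {g : G} (h : ∀ a ∈ s, a < g) :
    s.max < (g : WithBot G) := by
  rcases hs : s.max with _ | m
  · exact WithBot.bot_lt_coe g
  · exact WithBot.coe_lt_coe.2 (h m (Finset.mem_of_max hs))

lemma coeff_eq_zero_of_max_lt {u : G →₀ K} {g : G} (h : u.support.max < (g : WithBot G)) :
    u g = 0 := by
  by_contra hc
  exact absurd (Finset.le_max (Finsupp.mem_support_iff.2 hc)) h.not_ge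

lemma max_erase_lt {u : G →₀ K} {g : G} (h : u.support.max ≤ (g : WithBot G)) :
    (u.erase g).support.max < (g : WithBot G) := by
  apply max_lt_coe_of_forall
  intro a ha
  rw [Finsupp.support_erase, Finset.mem_erase] at ha
  exact lt_of_le_of_ne (WithBot.coe_le_coe.1 ((Finset.le_max ha.2).trans h)) ha.1

lemma max_add_le (u v : G →₀ K) :
    (u + v).support.max ≤ max u.support.max v.support.max :=
  le_trans (Finset.max_mono Finsupp.support_add) (le_of_eq Finset.max_union)

lemma max_smul_le (c : K) (u : G →₀ K) : (c • u).support.max ≤ u.support.max :=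
  Finset.max_mono Finsupp.support_smul

lemma max_induction (P : (G →₀ K) → Prop) (h0 : P 0)
    (step : ∀ u : G →₀ K, u ≠ 0 →
      (∀ v : G →₀ K, v.support.max < u.support.max → P v) → P u) :
    ∀ u, P u := by
  have key : ∀ m : WithBot G, ∀ u : G →₀ K, u.support.max = m → P u := by
    intro m
    induction m using WellFoundedLT.induction with
    | _ m ih =>
      intro u hu
      rcases eq_or_ne u 0 with rfl | hne
      · exact h0
      · exact step u hne fun v hv => ih _ (hu ▸ hv) v rfl
  exact fun u => key _ u rfl

-- new material
lemma redop_single_max_le {T : (G →₀ K) →ₗ[K] (G →₀ K)} (hT : IsRedOp T) (g : G) :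
    (T (single g 1)).support.max ≤ (g : WithBot G) := by
  rcases hT.2 g with h | h
  · rw [h, Finsupp.support_single_ne_zero g one_ne_zero, Finset.max_singleton]
  · exact h.le

lemma decomp (u : G →₀ K) (g : G) : u = u g • single g (1 : K) + u.erase g := by
  rw [Finsupp.smul_single, smul_eq_mul, mul_one, Finsupp.single_add_erase]

lemma max_of_coeff_ne_zero {u : G →₀ K} {g : G} (h : u g ≠ 0)
    (h2 : u.support.max ≤ (g : WithBot G)) : u.support.max = (g : WithBot G) :=
  le_antisymm h2 (Finset.le_max (Finsupp.mem_support_iff.2 h))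

lemma redop_max_le {T : (G →₀ K) →ₗ[K] (G →₀ K)} (hT : IsRedOp T) :
    ∀ u : G →₀ K, (T u).support.max ≤ u.support.max := by
  refine max_induction _ (by simp) ?_
  intro u hne ih
  obtain ⟨g, hg⟩ := Finset.max_of_nonempty (Finsupp.support_nonempty_iff.2 hne)
  have hTu : T u = u g • T (single g 1) + T (u.erase g) := by
    conv_lhs => rw [decomp u g]
    rw [map_add, map_smul]
  rw [hTu, hg]
  refine le_trans (max_add_le _ _) (max_le ?_ ?_)
  · exact le_trans (max_smul_le _ _) (redop_single_max_le hT g)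
  · exact le_trans (ih _ (by rw [hg]; exact max_erase_lt hg.le)) (max_erase_lt hg.le).le

lemma idem_apply {T : (G →₀ K) →ₗ[K] (G →₀ K)} (hT : IsRedOp T) (u : G →₀ K) :
    T (T u) = T u := by
  have := congrArg (fun f => f u) hT.1
  simpa using this

def ltSet (V : Submodule K (G →₀ K)) : Set G :=
  {g | ∃ v ∈ V, v.support.max = (g : WithBot G)}

lemma redop_fix_iff {T : (G →₀ K) →ₗ[K] (G →₀ K)} (hT : IsRedOp T) (g : G) :
    T (single g 1) = single g 1 ↔ g ∉ ltSet (LinearMap.ker T) := by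
  constructor
  · rintro hfix ⟨v, hv, hmax⟩
    have hvg : v g ≠ 0 := Finsupp.mem_support_iff.1 (Finset.mem_of_max hmax)
    have h0 : T v = 0 := hv
    have hTv : T v = v g • T (single g 1) + T (v.erase g) := by
      conv_lhs => rw [decomp v g]
      rw [map_add, map_smul]
    have hcoef : (T v) g = v g := by
      rw [hTv, hfix]
      have hz : (T (v.erase g)) g = 0 :=
        coeff_eq_zero_of_max_lt (lt_of_le_of_lt (redop_max_le hT _) (max_erase_lt hmax.le))
      simp [hz, Finsupp.single_apply]
    rw [h0] at hcoef
    exact hvg (by simpa using hcoef.symm)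
  · intro hns
    by_contra hne
    have hlt : (T (single g 1)).support.max < (g : WithBot G) := (hT.2 g).resolve_left hne
    set v := single g (1 : K) - T (single g 1) with hv
    have hker : v ∈ LinearMap.ker T := by
      simp only [LinearMap.mem_ker, hv, map_sub, idem_apply hT, sub_self]
    apply hns
    refine ⟨v, hker, ?_⟩
    have hvg : v g = 1 := by
      have : (T (single g 1)) g = 0 := coeff_eq_zero_of_max_lt hlt
      simp [hv, this, Finsupp.single_apply]
    refine max_of_coeff_ne_zero (by rw [hvg]; exact one_ne_zero) ?_
    have : v = single g (1 : K) + (-(T (single g 1))) := by rw [hv, sub_eq_add_neg]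
    rw [this]
    refine le_trans (max_add_le _ _) (max_le ?_ ?_)
    · rw [Finsupp.support_single_ne_zero g one_ne_zero, Finset.max_singleton]
    · rw [Finsupp.support_neg]; exact (redop_single_max_le hT g)

lemma redop_eq_on_fixed {T T' : (G →₀ K) →ₗ[K] (G →₀ K)} (hT : IsRedOp T) (hT' : IsRedOp T')
    (hfix : ∀ g : G, T (single g 1) = single g 1 → T' (single g 1) = single g 1) :
    ∀ u : G →₀ K, T u = u → T' u = u := by
  refine max_induction (fun u => T u = u → T' u = u) (by simp) ?_
  intro u hne ih hu
  obtain ⟨g, hg⟩ := Finset.max_of_nonempty (Finsupp.support_nonempty_iff.2 hne)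
  have hug : u g ≠ 0 := Finsupp.mem_support_iff.1 (Finset.mem_of_max hg)
  have hTu : T u = u g • T (single g 1) + T (u.erase g) := by
    conv_lhs => rw [decomp u g]
    rw [map_add, map_smul]
  have hz : (T (u.erase g)) g = 0 :=
    coeff_eq_zero_of_max_lt (lt_of_le_of_lt (redop_max_le hT _) (max_erase_lt hg.le))
  have hcoef : u g * 1 = u g * (T (single g 1)) g := by
    conv_lhs => rw [mul_one, ← hu, hTu]
    simp [hz]
  have h1 : (T (single g 1)) g = 1 := (mul_left_cancel₀ hug hcoef).symm
  have hfixg : T (single g 1) = single g 1 := by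
    rcases hT.2 g with h | h
    · exact h
    · exact absurd (coeff_eq_zero_of_max_lt h) (by rw [h1]; exact one_ne_zero)
  have hTe : T (u.erase g) = u.erase g := by
    have : T (u.erase g) = T u - u g • T (single g 1) := by
      rw [hTu]; abel
    rw [this, hu, hfixg, sub_eq_iff_eq_add, add_comm]
    exact decomp u g
  have hIH : T' (u.erase g) = u.erase g :=
    ih _ (by rw [hg]; exact max_erase_lt hg.le) hTe
  conv_lhs => rw [decomp u g]
  rw [map_add, map_smul, hfix g hfixg, hIH, ← decomp]

lemma redop_inj {T T' : (G →₀ K) →ₗ[K] (G →₀ K)} (hT : IsRedOp T) (hT' : IsRedOp T')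
    (hker : LinearMap.ker T = LinearMap.ker T') : T = T' := by
  have hfix : ∀ g : G, T (single g 1) = single g 1 ↔ T' (single g 1) = single g 1 := by
    intro g
    rw [redop_fix_iff hT, redop_fix_iff hT', hker]
  have hF : ∀ u : G →₀ K, T u = u ↔ T' u = u := fun u =>
    ⟨redop_eq_on_fixed hT hT' (fun g h => (hfix g).1 h) u,
     redop_eq_on_fixed hT' hT (fun g h => (hfix g).2 h) u⟩
  have hsingle : ∀ g : G, T (single g 1) = T' (single g 1) := by
    intro g
    set x : G →₀ K := single g 1
    set a := T x
    set b := T' x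
    have hb : T b = b := (hF b).2 (idem_apply hT' x)
    have hub : x - b ∈ LinearMap.ker T := by
      rw [hker]
      simp only [LinearMap.mem_ker, map_sub, idem_apply hT' x, sub_self]
      exact sub_eq_zero.2 (idem_apply hT' x).symm
    have hua : x - a ∈ LinearMap.ker T := by
      simp only [LinearMap.mem_ker, map_sub, idem_apply hT x, sub_self]
      exact sub_eq_zero.2 (idem_apply hT x).symm
    have h1 : T (a - b) = a - b := by
      rw [map_sub, idem_apply hT x, hb]
    have h2 : T (a - b) = 0 := by
      have : a - b = (x - b) - (x - a) := by abel
      rw [this, map_sub, LinearMap.mem_ker.1 hub, LinearMap.mem_ker.1 hua, sub_zero]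
    have := h1.symm.trans h2
    exact sub_eq_zero.1 this
  apply Finsupp.lhom_ext
  intro g c
  have : (single g c : G →₀ K) = c • single g 1 := by
    rw [Finsupp.smul_single, smul_eq_mul, mul_one]
  rw [this, map_smul, map_smul, hsingle g]

lemma disjoint_V_W (V : Submodule K (G →₀ K)) :
    Disjoint V (Finsupp.supported K K (ltSet V)ᶜ) := by
  rw [Submodule.disjoint_def]
  intro u huV huW
  by_contra hne
  obtain ⟨g, hg⟩ := Finset.max_of_nonempty (Finsupp.support_nonempty_iff.2 hne)
  exact ((Finsupp.mem_supported K u).1 huW (Finset.mem_of_max hg)) ⟨u, huV, hg⟩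

lemma sup_V_W (V : Submodule K (G →₀ K)) :
    V ⊔ (Finsupp.supported K K (ltSet V)ᶜ) = ⊤ := by
  rw [eq_top_iff]
  intro u _
  refine max_induction (fun u => u ∈ V ⊔ Finsupp.supported K K (ltSet V)ᶜ)
    (zero_mem _) ?_ u
  intro u hne ih
  obtain ⟨g, hg⟩ := Finset.max_of_nonempty (Finsupp.support_nonempty_iff.2 hne)
  have hug : u g ≠ 0 := Finsupp.mem_support_iff.1 (Finset.mem_of_max hg)
  by_cases hlt : g ∈ ltSet V
  · obtain ⟨v, hvV, hvmax⟩ := hlt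
    have hd : v g ≠ 0 := Finsupp.mem_support_iff.1 (Finset.mem_of_max hvmax)
    set c : K := u g / v g with hc
    set u' : G →₀ K := u - c • v with hu'
    have hu'g : u' g = 0 := by
      simp only [hu', Finsupp.sub_apply, Finsupp.smul_apply, smul_eq_mul, hc]
      rw [div_mul_cancel₀ _ hd, sub_self]
    have hmax' : u'.support.max < (g : WithBot G) := by
      apply max_lt_coe_of_forall
      intro h hh
      have hh' : u' h ≠ 0 := Finsupp.mem_support_iff.1 hh
      have hne_g : h ≠ g := fun e => hh' (e ▸ hu'g)
      have hle : (h : WithBot G) ≤ (g : WithBot G) := by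
        rcases eq_or_ne (u h) 0 with h0 | h0
        · have hvh : v h ≠ 0 := by
            intro hv0
            apply hh'
            simp [hu', h0, hv0]
          exact le_trans (Finset.le_max (Finsupp.mem_support_iff.2 hvh)) hvmax.le
        · exact le_trans (Finset.le_max (Finsupp.mem_support_iff.2 h0)) hg.le
      exact lt_of_le_of_ne (WithBot.coe_le_coe.1 hle) hne_g
    have hIH : u' ∈ V ⊔ Finsupp.supported K K (ltSet V)ᶜ := ih u' (hg ▸ hmax')
    have : u = u' + c • v := by rw [hu']; abel
    rw [this]
    exact add_mem hIH (Submodule.mem_sup_left (Submodule.smul_mem _ _ hvV))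
  · have hsingle : (single g (u g) : G →₀ K) ∈ Finsupp.supported K K (ltSet V)ᶜ := by
      rw [Finsupp.mem_supported]
      intro h hh
      have : h = g := by
        have := Finsupp.support_single_subset (Finset.mem_coe.1 hh)
        simpa using this
      simpa [this] using hlt
    have hIH : u.erase g ∈ V ⊔ Finsupp.supported K K (ltSet V)ᶜ :=
      ih _ (hg ▸ max_erase_lt hg.le)
    have : u = single g (u g) + u.erase g := (Finsupp.single_add_erase g u).symm
    rw [this]
    exact add_mem (Submodule.mem_sup_right hsingle) hIH

lemma redop_surj (V : Submodule K (G →₀ K)) :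
    ∃ T : (G →₀ K) →ₗ[K] (G →₀ K), IsRedOp T ∧ LinearMap.ker T = V := by
  set W := Finsupp.supported K K (ltSet V)ᶜ with hW
  have hcompl : IsCompl W V :=
    ⟨(disjoint_V_W V).symm, codisjoint_iff.2 (by rw [sup_comm]; exact sup_V_W V)⟩
  set π := Submodule.projectionOnto W V hcompl with hπ
  refine ⟨W.subtype ∘ₗ π, ⟨?_, ?_⟩, ?_⟩
  · apply LinearMap.ext
    intro x
    show ((π ((π x : G →₀ K)) : W) : G →₀ K) = ((π x : W) : G →₀ K)
    rw [Submodule.projectionOnto_apply_left hcompl (π x)]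
  · intro g
    by_cases hlt : g ∈ ltSet V
    · right
      set x : G →₀ K := single g 1 with hx
      set w : G →₀ K := ((π x : W) : G →₀ K) with hw
      have hwW : w ∈ W := (π x).2
      have hvV : x - w ∈ V := by
        have hπw : π w = π x := Submodule.projectionOnto_apply_left hcompl (π x)
        have : π (x - w) = 0 := by rw [map_sub, hπw, sub_self]
        exact (Submodule.projectionOnto_apply_eq_zero_iff hcompl).1 this
      show w.support.max < (g : WithBot G)
      apply max_lt_coe_of_forall
      intro h hh
      have hwh : w h ≠ 0 := Finsupp.mem_support_iff.1 hh
      have hhc : h ∈ (ltSet V)ᶜ := (Finsupp.mem_supported K w).1 hwW hh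
      have hne_g : h ≠ g := fun e => hhc (e ▸ hlt)
      by_contra hnlt
      have hgh : g < h := lt_of_le_of_ne (not_lt.1 hnlt) (Ne.symm hne_g)
      have hxh : x h = 0 := by
        rw [hx, Finsupp.single_apply, if_neg (fun e => hne_g e.symm)]
      have hvh : (x - w) h ≠ 0 := by
        rw [Finsupp.sub_apply, hxh, zero_sub, neg_ne_zero]; exact hwh
      have hvne : x - w ≠ 0 := fun e => hvh (by rw [e]; rfl)
      obtain ⟨m, hm⟩ := Finset.max_of_nonempty (Finsupp.support_nonempty_iff.2 hvne)
      have hmlt : m ∈ ltSet V := ⟨x - w, hvV, hm⟩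
      have hhm : h ≤ m :=
        WithBot.coe_le_coe.1 ((Finset.le_max (Finsupp.mem_support_iff.2 hvh)).trans hm.le)
      have hmne_g : m ≠ g := fun e => absurd (e ▸ (hgh.trans_le hhm)) (lt_irrefl g)
      have hvm : (x - w) m ≠ 0 := Finsupp.mem_support_iff.1 (Finset.mem_of_max hm)
      have hwm : w m ≠ 0 := by
        intro h0
        apply hvm
        rw [Finsupp.sub_apply, h0, sub_zero, hx, Finsupp.single_apply,
          if_neg (fun e => hmne_g e.symm)]
      exact ((Finsupp.mem_supported K w).1 hwW (Finsupp.mem_support_iff.2 hwm)) hmlt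
    · left
      have hmem : (single g 1 : G →₀ K) ∈ W := by
        rw [hW, Finsupp.mem_supported]
        intro h hh
        have : h = g := by
          have := Finsupp.support_single_subset (Finset.mem_coe.1 hh)
          simpa using this
        simpa [this] using hlt
      show ((π (single g 1) : W) : G →₀ K) = single g 1
      have := Submodule.projectionOnto_apply_left hcompl ⟨single g 1, hmem⟩
      rw [show ((⟨single g 1, hmem⟩ : W) : G →₀ K) = single g 1 from rfl] at this
      rw [this]
  · ext x
    simp only [LinearMap.mem_ker, LinearMap.comp_apply, Submodule.subtype_apply,
      Submodule.coe_eq_zero]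
    exact Submodule.projectionOnto_apply_eq_zero_iff hcompl


theorem kernel_map_bijective :
    Function.Bijective
      (fun T : {T : (G →₀ K) →ₗ[K] (G →₀ K) // IsRedOp T} => LinearMap.ker T.1) := by
  constructor
  · rintro ⟨T, hT⟩ ⟨T', hT'⟩ h
    exact Subtype.ext (redop_inj hT hT' h)
  · intro V
    obtain ⟨T, hT, hker⟩ := redop_surj V
    exact ⟨⟨T, hT⟩, hker⟩
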